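/- Let N ≥ 2 and for R = (R¹, …, R^N) ∈ ℝ^N and 1 ≤ i ≤ N define λ^i(R) = Π_{k≠i} R^k and μ^i(R) = Σ_{k≠i} R^k − Π_{k≠i} R^k. Then for all R ∈ ℝ^N and all i ≠ j, the Tsarev commutativity condition holds in the polynomial form (∂λ^i/∂R^j)·(μ^j − μ^i) = (∂μ^i/∂R^j)·(λ^j − λ^i). -/

import Mathlib

/-- Partial derivative of `f : ℝⁿ → ℝ` in the `i`-th coordinate direction. -/
noncomputable def pd {n : ℕ} (i : Fin n) (f : (Fin n → ℝ) → ℝ) (x : Fin n → ℝ) : ℝ :=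
  fderiv ℝ f x (Pi.single i 1)

/-- For `λⁱ(R) = Π_{k≠i} R^k` and `μⁱ(R) = Σ_{k≠i} R^k − Π_{k≠i} R^k`, Tsarev's
commutativity conditions hold in the denominator-free form
`(∂_j λⁱ)(μ^j − μⁱ) = (∂_j μⁱ)(λ^j − λⁱ)` for all `i ≠ j`. -/
lemma pd_prod {n : ℕ} (u : Finset (Fin n)) (j : Fin n) (hj : j ∈ u) (R : Fin n → ℝ) :
    pd j (fun x => ∏ k ∈ u, x k) R = ∏ m ∈ u.erase j, R m := by
  have h : HasFDerivAt (𝕜 := ℝ) (fun x : Fin n → ℝ => ∏ k ∈ u, x k)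
      (∑ k ∈ u, (∏ m ∈ u.erase k, R m) • ContinuousLinearMap.proj k) R :=
    HasFDerivAt.finset_prod (fun k _ => hasFDerivAt_apply k R)
  rw [pd, h.fderiv]
  rw [ContinuousLinearMap.sum_apply]
  rw [Finset.sum_eq_single j]
  · simp
  · intro k hk hkj
    simp [Pi.single_apply, hkj]
  · exact fun h => absurd hj h

lemma pd_sum {n : ℕ} (u : Finset (Fin n)) (j : Fin n) (hj : j ∈ u) (R : Fin n → ℝ) :
    pd j (fun x => ∑ k ∈ u, x k) R = 1 := by
  have h : HasFDerivAt (𝕜 := ℝ) (fun x : Fin n → ℝ => ∑ k ∈ u, x k)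
      (∑ k ∈ u, ContinuousLinearMap.proj k) R :=
    HasFDerivAt.fun_sum (fun k _ => hasFDerivAt_apply k R)
  rw [pd, h.fderiv]
  rw [ContinuousLinearMap.sum_apply]
  rw [Finset.sum_eq_single j]
  · simp
  · intro k hk hkj
    simp [Pi.single_apply, hkj]
  · exact fun h => absurd hj h


theorem stmt12 (N : ℕ) (hN : 2 ≤ N)
    (lam mu : Fin N → (Fin N → ℝ) → ℝ)
    (hlam : ∀ (i : Fin N) (R : Fin N → ℝ), lam i R = ∏ k ∈ Finset.univ.erase i, R k)
    (hmu : ∀ (i : Fin N) (R : Fin N → ℝ),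
        mu i R = (∑ k ∈ Finset.univ.erase i, R k) - ∏ k ∈ Finset.univ.erase i, R k) :
    ∀ (R : Fin N → ℝ) (i j : Fin N), i ≠ j →
      pd j (lam i) R * (mu j R - mu i R) = pd j (mu i) R * (lam j R - lam i R) := by
  intro R i j hij
  have hlam' : lam i = fun x => ∏ k ∈ Finset.univ.erase i, x k := funext (hlam i)
  have hmu' : mu i = fun x => (∑ k ∈ Finset.univ.erase i, x k) - ∏ k ∈ Finset.univ.erase i, x k :=
    funext (hmu i)
  have hj : j ∈ Finset.univ.erase i := Finset.mem_erase.2 ⟨Ne.symm hij, Finset.mem_univ j⟩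
  have hi : i ∈ Finset.univ.erase j := Finset.mem_erase.2 ⟨hij, Finset.mem_univ i⟩
  -- derivative of mu i : as difference
  have hS : HasFDerivAt (𝕜 := ℝ) (fun x : Fin N → ℝ => ∑ k ∈ Finset.univ.erase i, x k)
      (∑ k ∈ Finset.univ.erase i, ContinuousLinearMap.proj k) R :=
    HasFDerivAt.fun_sum (fun k _ => hasFDerivAt_apply k R)
  have hP : HasFDerivAt (𝕜 := ℝ) (fun x : Fin N → ℝ => ∏ k ∈ Finset.univ.erase i, x k)
      (∑ k ∈ Finset.univ.erase i, (∏ m ∈ (Finset.univ.erase i).erase k, R m) •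
        ContinuousLinearMap.proj k) R :=
    HasFDerivAt.finset_prod (fun k _ => hasFDerivAt_apply k R)
  have hpdmu : pd j (mu i) R = 1 - ∏ m ∈ (Finset.univ.erase i).erase j, R m := by
    rw [hmu', pd, (hS.fun_sub hP).fderiv, ContinuousLinearMap.sub_apply]
    have e1 : (∑ k ∈ Finset.univ.erase i, ContinuousLinearMap.proj (R := ℝ) (φ := fun _ : Fin N => ℝ) k)
        (Pi.single j 1) = 1 := by
      rw [ContinuousLinearMap.sum_apply, Finset.sum_eq_single j]
      · simp
      · intro k hk hkj; simp [Pi.single_apply, hkj]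
      · exact fun h => absurd hj h
    have e2 : (∑ k ∈ Finset.univ.erase i, (∏ m ∈ (Finset.univ.erase i).erase k, R m) •
        ContinuousLinearMap.proj (R := ℝ) (φ := fun _ : Fin N => ℝ) k) (Pi.single j 1)
        = ∏ m ∈ (Finset.univ.erase i).erase j, R m := by
      rw [ContinuousLinearMap.sum_apply, Finset.sum_eq_single j]
      · simp
      · intro k hk hkj; simp [Pi.single_apply, hkj]
      · exact fun h => absurd hj h
    rw [e1, e2]
  have hpdlam : pd j (lam i) R = ∏ m ∈ (Finset.univ.erase i).erase j, R m := by
    rw [hlam']; exact pd_prod _ _ hj R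
  -- algebraic identities
  set Q := ∏ m ∈ (Finset.univ.erase i).erase j, R m with hQ
  have hcomm : (Finset.univ.erase j).erase i = (Finset.univ.erase i).erase j :=
    Finset.erase_right_comm
  have hPi : ∏ k ∈ Finset.univ.erase i, R k = R j * Q :=
    (Finset.mul_prod_erase _ _ hj).symm
  have hPj : ∏ k ∈ Finset.univ.erase j, R k = R i * Q := by
    rw [← Finset.mul_prod_erase _ _ hi, hcomm]
  have hSi : ∑ k ∈ Finset.univ.erase i, R k = R j + ∑ m ∈ (Finset.univ.erase i).erase j, R m :=
    (Finset.add_sum_erase _ _ hj).symm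
  have hSj : ∑ k ∈ Finset.univ.erase j, R k = R i + ∑ m ∈ (Finset.univ.erase i).erase j, R m := by
    rw [← Finset.add_sum_erase _ _ hi, hcomm]
  rw [hpdlam, hpdmu, hlam i, hlam j, hmu i, hmu j, hPi, hPj, hSi, hSj]
  ring
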